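/- For every integer q ≥ 3 and every integer n ≥ 3, any two distinct words w, w' ∈ CBFS_q(n) are cross-bifix-free: no nonempty proper prefix of w is a suffix of w' and no nonempty proper prefix of w' is a suffix of w. -/

import Mathlib

/-- Value of a letter: 1 ↦ +1, 0 ↦ -1, other letters ↦ 0. -/
def mval (a : ℕ) : ℤ := if a = 1 then 1 else if a = 0 then -1 else 0

/-- Value-sum of a word. -/
def vsum (w : List ℕ) : ℤ := (w.map mval).sum

/-- A (q-2)-colored Motzkin word over the alphabet Z_q = {0,...,q-1}:
all letters < q, every prefix has nonnegative value-sum, total value-sum 0. -/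
def IsMotzkinWord (q : ℕ) (w : List ℕ) : Prop :=
  (∀ a ∈ w, a < q) ∧ (∀ u, u <+: w → 0 ≤ vsum u) ∧ vsum w = 0

/-- The set 𝓜_{q-2}(n) of (q-2)-colored Motzkin words of length n. -/
def MotzkinSet (q n : ℕ) : Set (List ℕ) := {w | w.length = n ∧ IsMotzkinWord q w}

/-- M_{q-2}(n), the number of (q-2)-colored Motzkin words of length n. -/
noncomputable def Mnum (q n : ℕ) : ℕ := (MotzkinSet q n).ncard

/-- The set Ê_{q-2}(n) of elevated (q-2)-colored Motzkin words of length n: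
words 1α0 with α ∈ 𝓜_{q-2}(n-2). -/
def ElevatedSet (q n : ℕ) : Set (List ℕ) :=
  {w | w.length = n ∧ ∃ α ∈ MotzkinSet q (n - 2), w = 1 :: (α ++ [0])}

/-- The set A_q(n). -/
def SetA (q n : ℕ) : Set (List ℕ) :=
  {w | ∃ i ≤ n / 2, ∃ α ∈ MotzkinSet q i, ∃ β ∈ ElevatedSet q (n - i), w = α ++ β} \
    {w | ∃ α ∈ ElevatedSet q (n / 2), ∃ β ∈ ElevatedSet q (n / 2), w = α ++ β}

/-- The set B_q(n). -/
def SetB (q n : ℕ) : Set (List ℕ) :=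
  {w | ∃ i ≤ n / 2 - 1, ∃ α ∈ MotzkinSet q i, ∃ β ∈ ElevatedSet q (n - i - 1),
    w = 1 :: (α ++ β)}

/-- The set C_q(n): words γ0 with γ a (q-2)-colored Motzkin word of length n-1
having no factor which is an elevated Motzkin word of length j ≥ ⌈n/2⌉. -/
def SetC (q n : ℕ) : Set (List ℕ) :=
  {w | ∃ γ ∈ MotzkinSet q (n - 1),
    (∀ j, (n + 1) / 2 ≤ j → ∀ β ∈ ElevatedSet q j, ¬ β <:+: γ) ∧ w = γ ++ [0]}

/-- The cross-bifix-free candidate set CBFS_q(n). -/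
def CBFS (q n : ℕ) : Set (List ℕ) := SetA q n ∪ SetB q n ∪ SetC q n

/-- A word is bifix-free if no nonempty proper prefix of it is also a suffix of it. -/
def BifixFree (w : List ℕ) : Prop :=
  ∀ u, u <+: w → u ≠ [] → u.length < w.length → ¬ u <:+ w

/-- BF_q(n): the set of bifix-free words of length n over Z_q. -/
def BF (q n : ℕ) : Set (List ℕ) := {w | w.length = n ∧ (∀ a ∈ w, a < q) ∧ BifixFree w}

/-- F_{k,q}(n): the number of words of length n over Z_q avoiding k consecutive 0's. -/
noncomputable def Fcount (k q n : ℕ) : ℕ :=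
  {w : List ℕ | w.length = n ∧ (∀ a ∈ w, a < q) ∧ ¬ List.replicate k 0 <:+: w}.ncard

/-- The set S_{k,q}(n) of Bajic--Stojanovic--Chee--Kiah type words: words s of length n
over Z_q with s₁ = ⋯ = s_k = 0, s_{k+1} ≠ 0, s_n ≠ 0, and such that the subword
s_{k+2} ⋯ s_{n-1} contains no k consecutive 0's. -/
def SetS (q k n : ℕ) : Set (List ℕ) :=
  {s | s.length = n ∧ (∀ a ∈ s, a < q) ∧ s.take k = List.replicate k 0 ∧
    s.getD k 0 ≠ 0 ∧ s.getLast? ≠ some 0 ∧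
    ¬ List.replicate k 0 <:+: (s.drop (k + 1)).take (n - k - 2)}


section CBFSAux

lemma vsum_append' (a b : List ℕ) : vsum (a ++ b) = vsum a + vsum b := by
  simp [vsum]

lemma vsum_cons' (x : ℕ) (a : List ℕ) : vsum (x :: a) = mval x + vsum a := by
  simp [vsum]

lemma motzkin_prefix_nonneg {q m : ℕ} {w u : List ℕ} (hw : w ∈ MotzkinSet q m)
    (hu : u <+: w) : 0 ≤ vsum u := hw.2.2.1 u hu

lemma motzkin_suffix_nonpos {q m : ℕ} {w v : List ℕ} (hw : w ∈ MotzkinSet q m)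
    (hv : v <:+ w) : vsum v ≤ 0 := by
  obtain ⟨p, hp⟩ := hv
  have h1 : 0 ≤ vsum p := hw.2.2.1 p ⟨v, hp⟩
  have h2 : vsum p + vsum v = 0 := by rw [← vsum_append', hp]; exact hw.2.2.2
  linarith

lemma prefix_append_split {u a b : List ℕ} (hu : u <+: a ++ b) :
    u <+: a ∨ ∃ s, s <+: b ∧ u = a ++ s := by
  rcases le_or_gt u.length a.length with h | h
  · left
    have := List.prefix_iff_eq_take.mp hu
    rw [List.take_append, Nat.sub_eq_zero_of_le h, List.take_zero,
      List.append_nil] at this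
    rw [this]; exact List.take_prefix _ _
  · right
    refine ⟨b.take (u.length - a.length), List.take_prefix _ _, ?_⟩
    have := List.prefix_iff_eq_take.mp hu
    rwa [List.take_append, List.take_of_length_le (le_of_lt h)] at this

lemma suffix_append_split {v a b : List ℕ} (hv : v <:+ a ++ b) (h : b.length ≤ v.length) :
    ∃ a', a' <:+ a ∧ v = a' ++ b := by
  refine ⟨a.drop ((a ++ b).length - v.length), List.drop_suffix _ _, ?_⟩
  have hlen : v.length ≤ (a ++ b).length := hv.length_le
  have := List.suffix_iff_eq_drop.mp hv
  rw [List.drop_append] at this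
  have h0 : (a ++ b).length - v.length - a.length = 0 := by
    simp only [List.length_append] at *; omega
  rwa [h0, List.drop_zero] at this

lemma suffix_append_right {v a b : List ℕ} (hv : v <:+ a ++ b) (h : v.length ≤ b.length) :
    v <:+ b := by
  have := List.suffix_iff_eq_drop.mp hv
  rw [List.drop_append] at this
  have h0 : (a ++ b).length - v.length = a.length + ((a ++ b).length - v.length - a.length) := by
    simp only [List.length_append] at *; omega
  rw [h0, ← List.drop_drop, List.drop_length, List.drop_nil, List.nil_append] at this
  rw [this]; exact List.drop_suffix _ _

lemma prefix_append_left {u a b : List ℕ} (hu : u <+: a ++ b) (h : u.length ≤ a.length) :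
    u <+: a := by
  rcases prefix_append_split hu with h' | ⟨s, hs, rfl⟩
  · exact h'
  · simp only [List.length_append] at h
    have : s = [] := List.eq_nil_of_length_eq_zero (by omega)
    subst this; simpa using List.prefix_refl a

lemma elevated_len {q m : ℕ} {β : List ℕ} (hβ : β ∈ ElevatedSet q m) : β.length = m := hβ.1

lemma elevated_vsum {q m : ℕ} {β : List ℕ} (hβ : β ∈ ElevatedSet q m) : vsum β = 0 := by
  obtain ⟨hlen, δ, hδ, rfl⟩ := hβ
  rw [vsum_cons', vsum_append', hδ.2.2.2]
  simp [vsum, mval]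

lemma elevated_prefix_pos {q m : ℕ} {β u : List ℕ} (hβ : β ∈ ElevatedSet q m)
    (hu : u <+: β) (hne : u ≠ []) (hlt : u.length < β.length) : 1 ≤ vsum u := by
  obtain ⟨hlen, δ, hδ, rfl⟩ := hβ
  obtain ⟨t, rfl, ht⟩ : ∃ t, u = 1 :: t ∧ t <+: δ ++ [0] := by
    cases u with
    | nil => exact absurd rfl hne
    | cons x t =>
      obtain ⟨s, hs⟩ := hu
      injection hs with h1 h2
      exact ⟨t, by rw [h1], ⟨s, h2⟩⟩
  have hlt' : t.length ≤ δ.length := by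
    simp only [List.length_cons, List.length_append, List.length_nil] at hlt
    omega
  have htδ : t <+: δ := by
    have := List.prefix_iff_eq_take.mp ht
    rw [List.take_append, Nat.sub_eq_zero_of_le hlt', List.take_zero,
      List.append_nil] at this
    rw [this]; exact List.take_prefix _ _
  have h0 : 0 ≤ vsum t := hδ.2.2.1 t htδ
  rw [vsum_cons']
  have : mval 1 = 1 := by simp [mval]
  omega

lemma elevated_prefix_nonneg {q m : ℕ} {β u : List ℕ} (hβ : β ∈ ElevatedSet q m)
    (hu : u <+: β) : 0 ≤ vsum u := by
  rcases eq_or_ne u [] with rfl | hne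
  · simp [vsum]
  rcases eq_or_lt_of_le hu.length_le with h | h
  · rw [hu.eq_of_length h, elevated_vsum hβ]
  · linarith [elevated_prefix_pos hβ hu hne h]

lemma elevated_suffix_neg {q m : ℕ} {β v : List ℕ} (hβ : β ∈ ElevatedSet q m) (hv : v <:+ β)
    (hne : v ≠ []) (hlt : v.length < β.length) : vsum v ≤ -1 := by
  obtain ⟨p, hp⟩ := hv
  have hp1 : p <+: β := ⟨v, hp⟩
  have hpne : p ≠ [] := by
    rintro rfl
    simp only [List.nil_append] at hp
    rw [hp] at hlt; omega
  have hplt : p.length < β.length := by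
    have : p.length + v.length = β.length := by rw [← hp]; simp
    have hv0 : 0 < v.length := List.length_pos_iff.mpr hne
    omega
  have h1 : 1 ≤ vsum p := elevated_prefix_pos hβ hp1 hpne hplt
  have h2 : vsum p + vsum v = 0 := by rw [← vsum_append', hp, elevated_vsum hβ]
  linarith

/-- Suffix analysis for words of the form α ++ β with α Motzkin and β elevated. -/
lemma motz_elev_suffix {q i m : ℕ} {α β v : List ℕ} (hα : α ∈ MotzkinSet q i)
    (hβ : β ∈ ElevatedSet q m) (hv : v <:+ α ++ β) (hne : v ≠ []) :
    vsum v ≤ 0 ∧ (vsum v = 0 → β <:+ v) := by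
  rcases le_or_gt β.length v.length with h | h
  · obtain ⟨a', ha', rfl⟩ := suffix_append_split hv h
    have h1 : vsum a' ≤ 0 := motzkin_suffix_nonpos hα ha'
    have h2 : vsum (a' ++ β) = vsum a' := by rw [vsum_append', elevated_vsum hβ]; ring
    exact ⟨by omega, fun _ => List.suffix_append a' β⟩
  · have hvβ : v <:+ β := suffix_append_right hv (le_of_lt h)
    have := elevated_suffix_neg hβ hvβ hne h
    exact ⟨by omega, fun h0 => by omega⟩

lemma cbfs_length {q n : ℕ} (hn : 3 ≤ n) {w : List ℕ} (hw : w ∈ CBFS q n) : w.length = n := by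
  rcases hw with (hw | hw) | hw
  · obtain ⟨⟨i, hi, α, hα, β, hβ, rfl⟩, -⟩ := hw
    have h1 := hα.1
    have h2 := elevated_len hβ
    simp only [List.length_append, h1, h2]
    omega
  · obtain ⟨i, hi, α, hα, β, hβ, rfl⟩ := hw
    have h1 := hα.1
    have h2 := elevated_len hβ
    simp only [List.length_cons, List.length_append, h1, h2]
    omega
  · obtain ⟨γ, hγ, hfac, rfl⟩ := hw
    have h1 := hγ.1
    simp only [List.length_append, h1, List.length_singleton]
    omega

/-- Suffix side: nonempty proper suffixes of CBFS words have nonpositive value-sum,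
and value-sum zero forces an elevated suffix of length ≥ ⌈n/2⌉. -/
lemma cbfs_suffix {q n : ℕ} (hn : 3 ≤ n) {w v : List ℕ} (hw : w ∈ CBFS q n)
    (hv : v <:+ w) (hne : v ≠ []) (hlt : v.length < n) :
    vsum v ≤ 0 ∧ (vsum v = 0 → ∃ j β, (n + 1) / 2 ≤ j ∧ β ∈ ElevatedSet q j ∧ β <:+ v) := by
  rcases hw with (hw | hw) | hw
  · -- SetA
    obtain ⟨⟨i, hi, α, hα, β, hβ, rfl⟩, -⟩ := hw
    obtain ⟨h1, h2⟩ := motz_elev_suffix hα hβ hv hne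
    refine ⟨h1, fun h0 => ⟨n - i, β, ?_, hβ, h2 h0⟩⟩
    omega
  · -- SetB
    obtain ⟨i, hi, α, hα, β, hβ, rfl⟩ := hw
    have hlen : (1 :: (α ++ β)).length = n := by
      have h1 := hα.1
      have h2 := elevated_len hβ
      simp only [List.length_cons, List.length_append, h1, h2]; omega
    have hv' : v <:+ α ++ β := by
      rcases List.suffix_cons_iff.mp hv with h | h
      · exfalso; rw [h] at hlt; omega
      · exact h
    obtain ⟨h1, h2⟩ := motz_elev_suffix hα hβ hv' hne
    refine ⟨h1, fun h0 => ⟨n - i - 1, β, ?_, hβ, h2 h0⟩⟩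
    omega
  · -- SetC
    obtain ⟨γ, hγ, hfac, rfl⟩ := hw
    obtain ⟨a', ha', rfl⟩ := suffix_append_split hv
      (by simpa using Nat.succ_le_of_lt (List.length_pos_iff.mpr hne))
    have h1 : vsum a' ≤ 0 := motzkin_suffix_nonpos hγ ha'
    have h2 : vsum (a' ++ [0]) = vsum a' + (-1) := by
      rw [vsum_append']; simp [vsum, mval]
    constructor
    · omega
    · intro h0; omega

theorem cbfs_oneside {q n : ℕ} (hn : 3 ≤ n) {w w' u : List ℕ} (hw : w ∈ CBFS q n)
    (hw' : w' ∈ CBFS q n) (hu : u <+: w) (hne : u ≠ []) (hlt : u.length < n) :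
    ¬ u <:+ w' := by
  intro hsuf
  obtain ⟨hs1, hs2⟩ := cbfs_suffix hn hw' hsuf hne hlt
  rcases hw with (hwA | hwB) | hwC
  · -- w ∈ SetA
    obtain ⟨⟨i, hi, α, hα, β, hβ, rfl⟩, hexcl⟩ := hwA
    have hαl : α.length = i := hα.1
    have hβl : β.length = n - i := elevated_len hβ
    rcases le_or_gt u.length α.length with hle | hgt
    · -- u is a prefix of α, so vsum u ≥ 0
      have huα : u <+: α := prefix_append_left hu hle
      have hge : 0 ≤ vsum u := motzkin_prefix_nonneg hα huα
      have h0 : vsum u = 0 := le_antisymm hs1 hge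
      obtain ⟨j, β', hj, hβ', hβ'u⟩ := hs2 h0
      have hβ'l : β'.length = j := elevated_len hβ'
      have hjle : j ≤ u.length := by rw [← hβ'l]; exact hβ'u.length_le
      -- n even, j = n/2, u.length = i = n/2
      have hueq : u.length = i := by omega
      have hji : j = i ∧ i = n / 2 ∧ n - i = n / 2 := by omega
      have huα' : u = α := huα.eq_of_length (by rw [hueq, hαl])
      have hβ'u' : β' = u := hβ'u.eq_of_length (by omega)
      refine hexcl ⟨α, ?_, β, by rw [show n / 2 = n - i by omega]; exact hβ, rfl⟩
      rw [← huα', ← hβ'u']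
      rwa [show j = n / 2 by omega] at hβ'
    · -- u = α ++ s with s nonempty proper prefix of β : vsum u ≥ 1
      rcases prefix_append_split hu with h | ⟨s, hs, rfl⟩
      · exact absurd h.length_le (by omega)
      have hsne : s ≠ [] := by
        rintro rfl; simp at hgt
      have hslt : s.length < β.length := by
        simp only [List.length_append] at hlt; omega
      have h1 : 1 ≤ vsum s := elevated_prefix_pos hβ hs hsne hslt
      have h2 : 0 ≤ vsum α := motzkin_prefix_nonneg hα (List.prefix_refl α)
      rw [vsum_append'] at hs1
      omega
  · -- w ∈ SetB : vsum u ≥ 1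
    obtain ⟨i, hi, α, hα, β, hβ, rfl⟩ := hwB
    obtain ⟨t, rfl, ht⟩ : ∃ t, u = 1 :: t ∧ t <+: α ++ β := by
      cases u with
      | nil => exact absurd rfl hne
      | cons x t =>
        obtain ⟨s, hsx⟩ := hu
        injection hsx with h1 h2
        exact ⟨t, by rw [h1], ⟨s, h2⟩⟩
    have h0 : 0 ≤ vsum t := by
      rcases prefix_append_split ht with h | ⟨s, hsp, rfl⟩
      · exact motzkin_prefix_nonneg hα h
      · rw [vsum_append']
        have := motzkin_prefix_nonneg hα (List.prefix_refl α)
        have := elevated_prefix_nonneg hβ hsp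
        omega
    rw [vsum_cons'] at hs1
    have : mval 1 = 1 := by simp [mval]
    omega
  · -- w ∈ SetC
    obtain ⟨γ, hγ, hfac, rfl⟩ := hwC
    have hγl : γ.length = n - 1 := hγ.1
    have huγ : u <+: γ := prefix_append_left hu (by omega)
    have hge : 0 ≤ vsum u := motzkin_prefix_nonneg hγ huγ
    have h0 : vsum u = 0 := le_antisymm hs1 hge
    obtain ⟨j, β', hj, hβ', hβ'u⟩ := hs2 h0
    exact hfac j hj β' hβ' (hβ'u.isInfix.trans huγ.isInfix)

end CBFSAux

/-- CBFS_q(n) is a cross-bifix-free set: for distinct w, w' ∈ CBFS_q(n),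
no nonempty proper prefix of w is a suffix of w' and vice versa. -/
theorem cbfs_cross_bifix_free (q n : ℕ) (hq : 3 ≤ q) (hn : 3 ≤ n)
    (w w' : List ℕ) (hw : w ∈ CBFS q n) (hw' : w' ∈ CBFS q n) (hne : w ≠ w') :
    (∀ u, u <+: w → u ≠ [] → u.length < w.length → ¬ u <:+ w') ∧
    (∀ u, u <+: w' → u ≠ [] → u.length < w'.length → ¬ u <:+ w) := by
  have hwl := cbfs_length hn hw
  have hwl' := cbfs_length hn hw'
  constructor
  · intro u hu hune hult
    exact cbfs_oneside hn hw hw' hu hune (by omega)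
  · intro u hu hune hult
    exact cbfs_oneside hn hw' hw hu hune (by omega)
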